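/- Let R be a Dedekind domain with quotient field K, let A be a central simple K-algebra and B a maximal R-order in A. If P and Q are distinct prime ideals of B, then PQ ∩ K = (P ∩ R) ∩ (Q ∩ R). -/

import Mathlib

/-- A two-sided ideal of the order `B` in `A`, viewed as an `R`-submodule of `A`. -/
def IsTwoSidedBIdeal {R A : Type*} [CommRing R] [Ring A] [Algebra R A]
    (B : Subalgebra R A) (P : Submodule R A) : Prop :=
  P ≤ Subalgebra.toSubmodule B ∧ ∀ b ∈ B, ∀ p ∈ P, b * p ∈ P ∧ p * b ∈ P

/-- A prime ideal of the order `B`: a proper two-sided ideal `P` with `K·P = A` such that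
for two-sided ideals `S, T ⊇ P`, `S·T ⊆ P` implies `S ⊆ P` or `T ⊆ P`. -/
def IsPrimeBIdeal {R : Type*} (K : Type*) {A : Type*} [CommRing R] [Field K] [Ring A]
    [Algebra R A] [Algebra K A] (B : Subalgebra R A) (P : Submodule R A) : Prop :=
  IsTwoSidedBIdeal B P ∧ P ≠ Subalgebra.toSubmodule B ∧
    Submodule.span K (P : Set A) = ⊤ ∧
    ∀ S T : Submodule R A, IsTwoSidedBIdeal B S → IsTwoSidedBIdeal B T →
      P ≤ S → P ≤ T → S * T ≤ P → S ≤ P ∨ T ≤ P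

section Glue

variable {R K A : Type*} [CommRing R] [Field K] [Ring A] [Algebra R A] [Algebra K A]

/-- The two-sided ideal generated by `a` over `B`, together with `P`. -/
private def genId (B : Subalgebra R A) (P : Submodule R A) (a : A) : Submodule R A :=
  P ⊔ Submodule.span R {y | ∃ u ∈ B, ∃ v ∈ B, y = u * (a * v)}

private lemma genId_le (B : Subalgebra R A) (P : Submodule R A) (hPB : P ≤ Subalgebra.toSubmodule B)
    {a : A} (ha : a ∈ B) : genId B P a ≤ Subalgebra.toSubmodule B := by
  refine sup_le hPB (Submodule.span_le.2 ?_)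
  rintro _ ⟨u, hu, v, hv, rfl⟩
  exact B.mul_mem hu (B.mul_mem ha hv)

private lemma mem_genId (B : Subalgebra R A) (P : Submodule R A) {a : A} (ha : a ∈ B) :
    a ∈ genId B P a := by
  refine Submodule.mem_sup_right (Submodule.subset_span ⟨1, B.one_mem, 1, B.one_mem, by simp⟩)

private lemma genId_twoSided (B : Subalgebra R A) (P : Submodule R A)
    (hP : IsTwoSidedBIdeal B P) {a : A} (ha : a ∈ B) :
    IsTwoSidedBIdeal B (genId B P a) := by
  refine ⟨genId_le B P hP.1 ha, ?_⟩
  intro b hb p hp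
  rcases Submodule.mem_sup.1 hp with ⟨y, hy, z, hz, rfl⟩
  constructor
  · rw [mul_add]
    refine Submodule.add_mem _ (Submodule.mem_sup_left (hP.2 b hb y hy).1)
      (Submodule.mem_sup_right ?_)
    refine Submodule.span_induction (p := fun z _ => b * z ∈ Submodule.span R
      {y | ∃ u ∈ B, ∃ v ∈ B, y = u * (a * v)}) ?_ ?_ ?_ ?_ hz
    · rintro _ ⟨u, hu, v, hv, rfl⟩
      exact Submodule.subset_span ⟨b * u, B.mul_mem hb hu, v, hv, by rw [mul_assoc]⟩
    · simp
    · intro x y _ _ hx hy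
      rw [mul_add]; exact Submodule.add_mem _ hx hy
    · intro r x _ hx
      rw [mul_smul_comm]; exact Submodule.smul_mem _ r hx
  · rw [add_mul]
    refine Submodule.add_mem _ (Submodule.mem_sup_left (hP.2 b hb y hy).2)
      (Submodule.mem_sup_right ?_)
    refine Submodule.span_induction (p := fun z _ => z * b ∈ Submodule.span R
      {y | ∃ u ∈ B, ∃ v ∈ B, y = u * (a * v)}) ?_ ?_ ?_ ?_ hz
    · rintro _ ⟨u, hu, v, hv, rfl⟩
      refine Submodule.subset_span ⟨u, hu, v * b, B.mul_mem hv hb, by simp [mul_assoc]⟩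
    · simp
    · intro x y _ _ hx hy
      rw [add_mul]; exact Submodule.add_mem _ hx hy
    · intro r x _ hx
      rw [smul_mul_assoc]; exact Submodule.smul_mem _ r hx

/-- Element-level primality. -/
lemma elem_prime (B : Subalgebra R A) (P : Submodule R A) (hP : IsPrimeBIdeal K B P)
    {a b : A} (ha : a ∈ B) (hb : b ∈ B) (h : ∀ x ∈ B, a * x * b ∈ P) :
    a ∈ P ∨ b ∈ P := by
  have hPB := hP.1.1
  -- key : products of generators land in P
  have key : ∀ w ∈ Submodule.span R {y | ∃ u ∈ B, ∃ v ∈ B, y = u * (a * v)},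
      ∀ w' ∈ Submodule.span R {y | ∃ u ∈ B, ∃ v ∈ B, y = u * (b * v)}, w * w' ∈ P := by
    intro w hw
    refine Submodule.span_induction (p := fun w _ => ∀ w' ∈ Submodule.span R
      {y | ∃ u ∈ B, ∃ v ∈ B, y = u * (b * v)}, w * w' ∈ P) ?_ ?_ ?_ ?_ hw
    · rintro _ ⟨u, hu, v, hv, rfl⟩ w' hw'
      refine Submodule.span_induction (p := fun w' _ => u * (a * v) * w' ∈ P) ?_ ?_ ?_ ?_ hw'
      · rintro _ ⟨u', hu', v', hv', rfl⟩
        have ht : a * (v * u') * b ∈ P := h _ (B.mul_mem hv hu')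
        have h1 := (hP.1.2 _ hv' _ ht).2
        have h2 := (hP.1.2 _ hu _ h1).1
        have heq : u * (a * (v * u') * b * v') = u * (a * v) * (u' * (b * v')) := by
          simp only [mul_assoc]
        rwa [heq] at h2
      · simp
      · intro x y _ _ hx hy
        rw [mul_add]; exact P.add_mem hx hy
      · intro r x _ hx
        rw [mul_smul_comm]; exact P.smul_mem r hx
    · intro w' _
      rw [zero_mul]; exact P.zero_mem
    · intro x y _ _ hx hy w' hw'
      rw [add_mul]; exact P.add_mem (hx w' hw') (hy w' hw')
    · intro r x _ hx w' hw'
      rw [smul_mul_assoc]; exact P.smul_mem r (hx w' hw')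
  have hST : genId B P a * genId B P b ≤ P := by
    rw [Submodule.mul_le]
    intro s hs t ht
    rcases Submodule.mem_sup.1 hs with ⟨p₁, hp₁, w₁, hw₁, rfl⟩
    rcases Submodule.mem_sup.1 ht with ⟨p₂, hp₂, w₂, hw₂, rfl⟩
    have hw₁B : w₁ ∈ B := by
      have := genId_le B P hPB ha (Submodule.mem_sup_right hw₁)
      exact this
    have hw₂B : w₂ ∈ B := genId_le B P hPB hb (Submodule.mem_sup_right hw₂)
    have h11 : p₁ * p₂ ∈ P := (hP.1.2 _ (hPB hp₁) _ hp₂).1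
    have h12 : p₁ * w₂ ∈ P := (hP.1.2 _ hw₂B _ hp₁).2
    have h21 : w₁ * p₂ ∈ P := (hP.1.2 _ hw₁B _ hp₂).1
    have h22 : w₁ * w₂ ∈ P := key _ hw₁ _ hw₂
    have heq : (p₁ + w₁) * (p₂ + w₂) = p₁ * p₂ + p₁ * w₂ + (w₁ * p₂ + w₁ * w₂) := by
      rw [add_mul, mul_add, mul_add]
    rw [heq]
    exact P.add_mem (P.add_mem h11 h12) (P.add_mem h21 h22)
  rcases hP.2.2.2 _ _ (genId_twoSided B P hP.1 ha) (genId_twoSided B P hP.1 hb)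
      le_sup_left le_sup_left hST with hS | hT
  · exact Or.inl (hS (mem_genId B P ha))
  · exact Or.inr (hT (mem_genId B P hb))

end Glue

section Core

variable {Λ : Type*} [Ring Λ]

/-- Right multiplication as a left-`Λ`-linear map. -/
def rmulL (a : Λ) : Λ →ₗ[Λ] Λ where
  toFun x := x * a
  map_add' x y := add_mul x y a
  map_smul' c x := by simp [smul_eq_mul, mul_assoc]

@[simp] lemma rmulL_apply (a x : Λ) : rmulL a x = x * a := rfl

lemma mem_rmulL_top {g x : Λ} :
    x ∈ Submodule.map (rmulL g) ⊤ ↔ ∃ y : Λ, y * g = x := by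
  simp [Submodule.mem_map]

lemma mul_mem_left_ideal {L : Submodule Λ Λ} {a : Λ} (x : Λ) (ha : a ∈ L) : x * a ∈ L := by
  have := L.smul_mem x ha
  rwa [smul_eq_mul] at this

/-- Brauer-type lemma: in a "prime" ring with DCC on left ideals, every nonzero
left ideal contains a nonzero idempotent. -/
lemma core_brauer
    (hwf : WellFounded ((· < ·) : Submodule Λ Λ → Submodule Λ Λ → Prop))
    (hprime : ∀ a b : Λ, (∀ x : Λ, a * x * b = 0) → a = 0 ∨ b = 0)
    (I : Submodule Λ Λ) (hI : I ≠ ⊥) :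
    ∃ e, e ∈ I ∧ e ≠ 0 ∧ e * e = e := by
  obtain ⟨L, ⟨hLI, hL0⟩, hmin⟩ :=
    hwf.has_min {L : Submodule Λ Λ | L ≤ I ∧ L ≠ ⊥} ⟨I, le_rfl, hI⟩
  -- L² ≠ 0
  have hsq : ∃ a ∈ L, ∃ x ∈ L, x * a ≠ 0 := by
    by_contra h
    push_neg at h
    obtain ⟨a, haL, ha0⟩ := Submodule.exists_mem_ne_zero_of_ne_bot hL0
    have key : ∀ x : Λ, a * x * a = 0 := by
      intro x
      rw [mul_assoc]
      exact h (x * a) (mul_mem_left_ideal x haL) a haL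
    rcases hprime a a key with h' | h' <;> exact ha0 h'
  obtain ⟨a, haL, x, hxL, hxa0⟩ := hsq
  have haL' : Submodule.map (rmulL a) L ≤ L := by
    rintro _ ⟨y, hy, rfl⟩
    exact mul_mem_left_ideal y haL
  have hne : Submodule.map (rmulL a) L ≠ ⊥ := by
    intro h
    apply hxa0
    have : x * a ∈ Submodule.map (rmulL a) L := ⟨x, hxL, rfl⟩
    rw [h] at this
    simpa using this
  have heq : Submodule.map (rmulL a) L = L := by
    by_contra hne'
    exact hmin _ ⟨haL'.trans hLI, hne⟩ (lt_of_le_of_ne haL' hne')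
  obtain ⟨e, heL, hea⟩ : ∃ e ∈ L, e * a = a := by
    have ha' : a ∈ Submodule.map (rmulL a) L := by rw [heq]; exact haL
    obtain ⟨e, heL, he⟩ := ha'
    exact ⟨e, heL, he⟩
  have ha0 : a ≠ 0 := fun h => hxa0 (by rw [h, mul_zero])
  have he0 : e ≠ 0 := fun h => ha0 (by rw [← hea, h, zero_mul])
  have hker : L ⊓ LinearMap.ker (rmulL a) = ⊥ := by
    by_contra h
    refine hmin _ ⟨inf_le_left.trans hLI, h⟩ (lt_of_le_of_ne inf_le_left ?_)
    intro heq'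
    have h2 : e ∈ L ⊓ LinearMap.ker (rmulL a) := by rw [heq']; exact heL
    have := (Submodule.mem_inf.mp h2).2
    rw [LinearMap.mem_ker, rmulL_apply, hea] at this
    exact ha0 this
  have hee : e * e = e := by
    have hmem : e * e - e ∈ L ⊓ LinearMap.ker (rmulL a) := by
      refine Submodule.mem_inf.mpr ⟨sub_mem (mul_mem_left_ideal e heL) heL, ?_⟩
      rw [LinearMap.mem_ker, rmulL_apply, sub_mul, mul_assoc, hea, hea, sub_self]
    rw [hker] at hmem
    exact sub_eq_zero.1 (by simpa using hmem)
  exact ⟨e, hLI heL, he0, hee⟩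

/-- Every left ideal is generated by an idempotent. -/
lemma core_idem
    (hwf : WellFounded ((· < ·) : Submodule Λ Λ → Submodule Λ Λ → Prop))
    (hprime : ∀ a b : Λ, (∀ x : Λ, a * x * b = 0) → a = 0 ∨ b = 0)
    (I : Submodule Λ Λ) :
    ∃ g : Λ, g * g = g ∧ I = Submodule.map (rmulL g) ⊤ := by
  induction I using hwf.induction with
  | _ I IH =>
  by_cases hI : I = ⊥
  · refine ⟨0, by simp, ?_⟩
    subst hI
    ext z
    simp [mem_rmulL_top, eq_comm]
  · obtain ⟨e, heI, he0, hee⟩ := core_brauer hwf hprime I hI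
    set I' : Submodule Λ Λ := I ⊓ LinearMap.ker (rmulL e) with hI'def
    have hI'lt : I' < I := by
      refine lt_of_le_of_ne inf_le_left ?_
      intro h
      have h2 : e ∈ I' := by rw [h]; exact heI
      have := (Submodule.mem_inf.mp h2).2
      rw [LinearMap.mem_ker, rmulL_apply, hee] at this
      exact he0 this
    obtain ⟨f, hff, hI'⟩ := IH I' hI'lt
    have hfI' : f ∈ I' := by
      rw [hI']
      exact ⟨f, trivial, hff⟩
    have hfe : f * e = 0 := by
      have := (Submodule.mem_inf.mp hfI').2
      rwa [LinearMap.mem_ker, rmulL_apply] at this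
    have hfI : f ∈ I := (Submodule.mem_inf.mp hfI').1
    set g := e + f - e * f with hg
    have heg : e * g = e := by
      rw [hg, mul_sub, mul_add, ← mul_assoc, hee]
      abel
    have hfg : f * g = f := by
      rw [hg, mul_sub, mul_add, ← mul_assoc, hfe, zero_mul, hff]
      simp
    have hgg : g * g = g := by
      calc g * g = e * g + f * g - e * (f * g) := by
            rw [hg]; simp only [sub_mul, add_mul, mul_assoc]
        _ = g := by rw [heg, hfg, hg]
    have hgI : g ∈ I := sub_mem (add_mem heI hfI) (mul_mem_left_ideal e hfI)
    refine ⟨g, hgg, le_antisymm ?_ ?_⟩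
    · intro z hz
      have h1 : z - z * e ∈ I' := by
        refine Submodule.mem_inf.mpr ⟨sub_mem hz (mul_mem_left_ideal z heI), ?_⟩
        rw [LinearMap.mem_ker, rmulL_apply, sub_mul, mul_assoc, hee, sub_self]
      rw [hI'] at h1
      obtain ⟨y, -, hy⟩ := h1
      rw [rmulL_apply] at hy
      refine ⟨z * e + y * f, trivial, ?_⟩
      rw [rmulL_apply, add_mul, mul_assoc, mul_assoc, heg, hfg, hy]
      abel
    · rintro _ ⟨y, -, rfl⟩
      rw [rmulL_apply]
      exact mul_mem_left_ideal y hgI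

/-- A nonzero two-sided ideal in a "prime" ring with DCC is everything. -/
lemma core_simple
    (hwf : WellFounded ((· < ·) : Submodule Λ Λ → Submodule Λ Λ → Prop))
    (hprime : ∀ a b : Λ, (∀ x : Λ, a * x * b = 0) → a = 0 ∨ b = 0)
    (J : Submodule Λ Λ) (hJr : ∀ x ∈ J, ∀ y : Λ, x * y ∈ J) (hJ0 : J ≠ ⊥) :
    J = ⊤ := by
  obtain ⟨g, hgg, hJg⟩ := core_idem hwf hprime J
  have hgJ : g ∈ J := by
    rw [hJg]
    exact ⟨g, trivial, hgg⟩
  have hg0 : g ≠ 0 := by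
    intro h
    apply hJ0
    rw [hJg, h]
    ext z
    simp [mem_rmulL_top, eq_comm]
  have hzero : ∀ x : Λ, g * x * (1 - g) = 0 := by
    intro x
    have hgx : g * x ∈ J := hJr g hgJ x
    rw [hJg] at hgx
    obtain ⟨y, -, hy⟩ := hgx
    rw [rmulL_apply] at hy
    rw [← hy, mul_sub, mul_one, mul_assoc, hgg, sub_self]
  rcases hprime g (1 - g) hzero with h | h
  · exact absurd h hg0
  · have h1 : (1 : Λ) = g := sub_eq_zero.1 h
    rw [eq_top_iff]
    intro z _
    have : z * g ∈ J := mul_mem_left_ideal z hgJ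
    rwa [← h1, mul_one] at this

end Core

section QuotCon

variable {R A : Type*} [CommRing R] [Ring A] [Algebra R A]

/-- The ring congruence on `B` induced by a two-sided ideal `P ⊆ B` (as a submodule of `A`). -/
def orderCon (B : Subalgebra R A) (P : Submodule R A)
    (hside : ∀ b ∈ B, ∀ p ∈ P, b * p ∈ P ∧ p * b ∈ P) : RingCon B where
  r x y := ((x : A) - (y : A)) ∈ P
  iseqv := by
    refine ⟨fun x => by simp, fun {x y} h => ?_, fun {x y z} h1 h2 => ?_⟩
    · have := P.neg_mem h
      rwa [neg_sub] at this
    · have := P.add_mem h1 h2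
      rwa [sub_add_sub_cancel] at this
  add' := by
    intro w x y z h1 h2
    have := P.add_mem h1 h2
    have heq : ((w : A) - x) + ((y : A) - z) = (((w + y : B) : A)) - ((x + z : B) : A) := by
      push_cast
      abel
    rwa [heq] at this
  mul' := by
    intro w x y z h1 h2
    have hL := (hside (w : A) w.2 _ h2).1
    have hR := (hside (z : A) z.2 _ h1).2
    have := P.add_mem hL hR
    have heq : (w : A) * ((y : A) - z) + ((w : A) - x) * (z : A)
        = (((w * y : B) : A)) - ((x * z : B) : A) := by
      push_cast
      rw [mul_sub, sub_mul]
      abel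
    rwa [heq] at this

/-- The `R`-module structure on the quotient of `B` by a ring congruence. -/
def ringConModule {B : Type*} [Ring B] [Algebra R B] (c : RingCon B) :
    Module R c.Quotient :=
  { (inferInstance : DistribMulAction R c.Quotient) with
    add_smul := fun r s x => Quotient.inductionOn' x fun x => by
      change ((((r + s) • x : B) : c.Quotient)) = (((r • x : B) : c.Quotient)) + ((s • x : B) : c.Quotient)
      rw [add_smul]
      rfl
    zero_smul := fun x => Quotient.inductionOn' x fun x => by
      change (((0 • x : B) : c.Quotient)) = (((0 : B) : c.Quotient))
      rw [zero_smul] }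

end QuotCon

section Denom

variable {R K A : Type*} [CommRing R] [IsDomain R] [Field K] [Algebra R K] [IsFractionRing R K]
  [Ring A] [Algebra K A] [Algebra R A] [IsScalarTower R K A]

lemma exists_nonzero_denom (P : Submodule R A)
    (hspan : Submodule.span K (P : Set A) = ⊤) :
    ∃ s : R, s ≠ 0 ∧ algebraMap R A s ∈ P := by
  have key : ∀ y ∈ Submodule.span K (P : Set A), ∃ s : R, s ≠ 0 ∧ s • y ∈ P := by
    intro y hy
    refine Submodule.span_induction (p := fun y _ => ∃ s : R, s ≠ 0 ∧ s • y ∈ P)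
      ?_ ?_ ?_ ?_ hy
    · intro x hx
      exact ⟨1, one_ne_zero, by rwa [one_smul]⟩
    · exact ⟨1, one_ne_zero, by rw [smul_zero]; exact P.zero_mem⟩
    · rintro x y _ _ ⟨s, hs0, hs⟩ ⟨t, ht0, ht⟩
      refine ⟨s * t, mul_ne_zero hs0 ht0, ?_⟩
      rw [smul_add]
      refine P.add_mem ?_ ?_
      · rw [mul_comm, mul_smul]
        exact P.smul_mem t hs
      · rw [mul_smul]
        exact P.smul_mem s ht
    · rintro k y _ ⟨s, hs0, hs⟩
      obtain ⟨⟨n, d⟩, hd⟩ := IsLocalization.mk'_surjective (nonZeroDivisors R) k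
      refine ⟨(d : R) * s, mul_ne_zero (nonZeroDivisors.ne_zero d.2) hs0, ?_⟩
      have hsc : (algebraMap R K ((d : R) * s)) * k = algebraMap R K (n * s) := by
        rw [map_mul, map_mul, ← hd, mul_right_comm, IsLocalization.mk'_spec']
      have heq : ((d : R) * s) • (k • y) = n • (s • y) := by
        rw [← algebraMap_smul K ((d : R) * s) (k • y), smul_smul, hsc,
          algebraMap_smul, mul_smul]
      rw [heq]
      exact P.smul_mem n hs
  obtain ⟨s, hs0, hs⟩ := key 1 (by rw [hspan]; trivial)
  exact ⟨s, hs0, by rwa [Algebra.algebraMap_eq_smul_one]⟩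

end Denom

section Max

variable {R K A : Type*} [CommRing R] [IsDomain R] [IsDedekindDomain R]
    [Field K] [Algebra R K] [IsFractionRing R K]
    [Ring A] [Algebra K A] [Algebra R A] [IsScalarTower R K A]

set_option maxHeartbeats 1000000 in
set_option synthInstance.maxHeartbeats 400000 in
lemma artinian_quot_max {R : Type*} [CommRing R] (p : Ideal R) [p.IsMaximal] :
    IsArtinianRing (R ⧸ p) := by
  letI : Field (R ⧸ p) := Ideal.Quotient.field p
  exact DivisionRing.instIsArtinianRing

set_option maxHeartbeats 4000000 in
set_option synthInstance.maxHeartbeats 1000000 in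
lemma quot_one_mem {R A : Type*} [CommRing R] [Ring A] [Algebra R A]
    (p : Ideal R) [hpm : p.IsMaximal]
    (B : Subalgebra R A) (hBfg : (Subalgebra.toSubmodule B).FG)
    (P Q : Submodule R A) (hside : ∀ b ∈ B, ∀ x ∈ P, b * x ∈ P ∧ x * b ∈ P)
    (hpP : ∀ r ∈ p, algebraMap R A r ∈ P)
    (hprimeel : ∀ a b : A, a ∈ B → b ∈ B → (∀ x ∈ B, a * x * b ∈ P) → a ∈ P ∨ b ∈ P)
    (hQ : IsTwoSidedBIdeal B Q) (hQP : ¬ Q ≤ P)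
    (c : RingCon B) (hc : ∀ x y : B, c x y ↔ ((x : A) - (y : A)) ∈ P) :
    (1 : A) ∈ P ⊔ Q := by
  classical
  letI : Module R c.Quotient := ringConModule c
  have tor : Module.IsTorsionBySet R c.Quotient p := by
    rintro x ⟨a, haP⟩
    refine Quotient.inductionOn' x fun b => ?_
    show ((a • b : B) : c.Quotient) = ((0 : B) : c.Quotient)
    rw [c.eq, hc]
    have h1 : ((a • b : B) : A) = a • (b : A) := by push_cast; rfl
    rw [h1]
    have h2 : a • (b : A) = algebraMap R A a * (b : A) := Algebra.smul_def a _
    rw [h2]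
    simpa using (hside (b : A) b.2 _ (hpP a haP)).2
  letI : Module (R ⧸ p) c.Quotient := tor.module
  haveI : IsScalarTower R (R ⧸ p) c.Quotient :=
    ⟨fun b d x => Quotient.inductionOn' d fun e => (mul_smul b e x :)⟩
  haveI : Module.Finite R B := by
    have h := Module.Finite.iff_fg (N := Subalgebra.toSubmodule B) |>.2 hBfg
    exact h
  haveI : Module.Finite R c.Quotient :=
    Module.Finite.of_surjective
      (⟨⟨fun b => (b : c.Quotient), fun _ _ => rfl⟩, fun _ _ => rfl⟩ : B →ₗ[R] c.Quotient)
      (fun x => Quotient.inductionOn' x fun b => ⟨b, rfl⟩)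
  haveI : Module.Finite (R ⧸ p) c.Quotient :=
    @Module.Finite.of_restrictScalars_finite R (R ⧸ p) c.Quotient _ _ _ _ _ _
      ⟨fun b d x => Quotient.inductionOn' d fun e => (mul_smul b e x :)⟩ _
  haveI : IsArtinianRing (R ⧸ p) := artinian_quot_max p
  haveI : IsArtinian (R ⧸ p) c.Quotient := isArtinian_of_fg_of_artinian'
  have hwfk : WellFounded ((· < ·) : Submodule (R ⧸ p) c.Quotient → _ → Prop) :=
    (isArtinian_iff _ _).1 inferInstance
  -- transfer well-foundedness to left ideals of the quotient ring
  set F : Submodule c.Quotient c.Quotient → Submodule (R ⧸ p) c.Quotient := fun J =>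
    { carrier := J
      add_mem' := fun hx hy => J.add_mem hx hy
      zero_mem' := J.zero_mem
      smul_mem' := by
        intro r x hx
        obtain ⟨r, rfl⟩ := Ideal.Quotient.mk_surjective r
        show (Ideal.Quotient.mk p r) • x ∈ (J : Set c.Quotient)
        have hkey : (Ideal.Quotient.mk p r) • x = r • x := rfl
        rw [hkey]
        have h1 : r • x = (r • (1 : c.Quotient)) * x := by rw [smul_mul_assoc, one_mul]
        rw [h1, ← smul_eq_mul]
        exact J.smul_mem _ hx } with hF_def
  have hwf : WellFounded ((· < ·) : Submodule c.Quotient c.Quotient → _ → Prop) := by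
    have hstrict : ∀ {J J' : Submodule c.Quotient c.Quotient}, J < J' → F J < F J' := by
      intro J J' h
      refine lt_of_le_of_ne (fun x hx => h.le hx) ?_
      intro heq
      apply h.ne
      apply SetLike.coe_injective
      exact congrArg (fun (N : Submodule (R ⧸ p) c.Quotient) => (N : Set c.Quotient)) heq
    exact Subrelation.wf hstrict (InvImage.wf F hwfk)
  -- primality in the quotient
  have hpr : ∀ a b : c.Quotient, (∀ x, a * x * b = 0) → a = 0 ∨ b = 0 := by
    intro a b
    refine Quotient.inductionOn₂' a b fun a b h => ?_
    have h' : ∀ x ∈ B, (a : A) * x * (b : A) ∈ P := by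
      intro x hx
      have h0 := h ((⟨x, hx⟩ : B) : c.Quotient)
      have h1 : ((a * ⟨x, hx⟩ * b : B) : c.Quotient) = ((0 : B) : c.Quotient) := h0
      have h2 := (hc _ _).1 ((c.eq).1 h1)
      simpa using h2
    rcases hprimeel (a : A) (b : A) a.2 b.2 h' with h | h
    · left
      show ((a : B) : c.Quotient) = ((0 : B) : c.Quotient)
      rw [c.eq, hc]
      simpa using h
    · right
      show ((b : B) : c.Quotient) = ((0 : B) : c.Quotient)
      rw [c.eq, hc]
      simpa using h
  -- the image of Q in the quotient
  set J : Submodule c.Quotient c.Quotient :=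
    { carrier := {x | ∃ q : B, (q : A) ∈ Q ∧ (q : c.Quotient) = x}
      add_mem' := by
        rintro x y ⟨q, hq, rfl⟩ ⟨q', hq', rfl⟩
        exact ⟨q + q', by push_cast; exact Q.add_mem hq hq', rfl⟩
      zero_mem' := ⟨0, by simpa using Q.zero_mem, rfl⟩
      smul_mem' := by
        intro t x hx
        obtain ⟨q, hq, rfl⟩ := hx
        refine Quotient.inductionOn' t fun b => ?_
        refine ⟨b * q, ?_, rfl⟩
        have : (b : A) * (q : A) ∈ Q := (hQ.2 (b : A) b.2 _ hq).1
        simpa using this } with hJ_def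
  have hJr : ∀ x ∈ J, ∀ y : c.Quotient, x * y ∈ J := by
    rintro x ⟨q, hq, rfl⟩ y
    refine Quotient.inductionOn' y fun b => ?_
    refine ⟨q * b, ?_, rfl⟩
    have : (q : A) * (b : A) ∈ Q := (hQ.2 (b : A) b.2 _ hq).2
    simpa using this
  have hJ0 : J ≠ ⊥ := by
    obtain ⟨q, hqQ, hqP⟩ : ∃ q, q ∈ Q ∧ q ∉ P := by
      by_contra h
      push_neg at h
      exact hQP h
    have hqB : q ∈ B := hQ.1 hqQ
    refine Submodule.ne_bot_iff _ |>.2 ⟨((⟨q, hqB⟩ : B) : c.Quotient), ⟨⟨q, hqB⟩, hqQ, rfl⟩, ?_⟩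
    intro h0
    apply hqP
    have h1 : ((⟨q, hqB⟩ : B) : c.Quotient) = ((0 : B) : c.Quotient) := h0
    have h2 := (hc _ _).1 ((c.eq).1 h1)
    simpa using h2
  have hJtop : J = ⊤ := core_simple hwf hpr J hJr hJ0
  have h1J : (1 : c.Quotient) ∈ J := by rw [hJtop]; trivial
  obtain ⟨q, hqQ, hq1⟩ := h1J
  have h2 : ((q : B) : A) - ((1 : B) : A) ∈ P := (hc _ _).1 ((c.eq).1 hq1)
  rw [Submodule.mem_sup]
  refine ⟨-((q : A) - 1), P.neg_mem (by simpa using h2), (q : A), hqQ, by abel⟩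

lemma one_mem_sup (B : Subalgebra R A) (hBfg : (Subalgebra.toSubmodule B).FG)
    (P Q : Submodule R A) (hP : IsPrimeBIdeal K B P) (hQ : IsTwoSidedBIdeal B Q)
    (hQP : ¬ Q ≤ P) : (1 : A) ∈ P ⊔ Q := by
  set p : Ideal R := Submodule.comap (Algebra.linearMap R A) P with hp_def
  have hp_mem : ∀ r : R, r ∈ p ↔ algebraMap R A r ∈ P := by
    intro r
    rw [hp_def, Submodule.mem_comap, Algebra.linearMap_apply]
  have hPneTop : P ≠ Subalgebra.toSubmodule B := hP.2.1
  have hp_prime : p.IsPrime := by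
    constructor
    · intro h
      apply hPneTop
      have h1 : (1 : A) ∈ P := by
        have := (hp_mem 1).1 (h ▸ Submodule.mem_top)
        rwa [map_one] at this
      refine le_antisymm hP.1.1 ?_
      intro b hb
      have := (hP.1.2 b hb 1 h1).1
      rwa [mul_one] at this
    · intro r s hrs
      have h' : ∀ x ∈ B, algebraMap R A r * x * algebraMap R A s ∈ P := by
        intro x hx
        rw [Algebra.commutes r x, mul_assoc, ← map_mul]
        exact (hP.1.2 x hx _ ((hp_mem _).1 hrs)).1
      rcases elem_prime B P hP (B.algebraMap_mem r) (B.algebraMap_mem s) h' with h | h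
      · exact Or.inl ((hp_mem r).2 h)
      · exact Or.inr ((hp_mem s).2 h)
  have hp0 : p ≠ ⊥ := by
    obtain ⟨s, hs0, hs⟩ := exists_nonzero_denom (K := K) P hP.2.2.1
    intro h
    have : s ∈ p := (hp_mem s).2 hs
    rw [h] at this
    exact hs0 this
  haveI hpm : p.IsMaximal := hp_prime.isMaximal hp0
  exact quot_one_mem p B hBfg P Q hP.1.2 (fun r hr => (hp_mem r).1 hr)
    (fun a b ha hb h => elem_prime B P hP ha hb h) hQ hQP
    (orderCon B P hP.1.2) (fun x y => Iff.rfl)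

end Max


/-- Let `R` be a Dedekind domain with quotient field `K`, `A` a central simple `K`-algebra
and `B` a maximal `R`-order in `A`. If `P ≠ Q` are prime ideals of `B`, then
`PQ ∩ K = (P ∩ R) ∩ (Q ∩ R)`. -/
theorem stmt_6 {R K A : Type*} [CommRing R] [IsDomain R] [IsDedekindDomain R]
    [Field K] [Algebra R K] [IsFractionRing R K]
    [Ring A] [Algebra K A] [Algebra R A] [IsScalarTower R K A]
    [FiniteDimensional K A] [Algebra.IsCentral K A] [IsSimpleRing A]
    (B : Subalgebra R A)
    (hBfg : (Subalgebra.toSubmodule B).FG)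
    (hBfull : Submodule.span K (B : Set A) = ⊤)
    (hBmax : ∀ C : Subalgebra R A, (Subalgebra.toSubmodule C).FG →
      Submodule.span K (C : Set A) = ⊤ → B ≤ C → C = B)
    (P Q : Submodule R A) (hP : IsPrimeBIdeal K B P) (hQ : IsPrimeBIdeal K B Q)
    (hPQ : P ≠ Q) :
    ∀ x : K, algebraMap K A x ∈ P * Q ↔
      (algebraMap K A x ∈ P ∧ algebraMap K A x ∈ Q ∧ ∃ r : R, algebraMap R K r = x) := by
  intro x
  have hPQ_P : P * Q ≤ P := Submodule.mul_le.2 fun m hm n hn =>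
    (hP.1.2 n (Subalgebra.mem_toSubmodule B |>.1 (hQ.1.1 hn)) m hm).2
  have hPQ_Q : P * Q ≤ Q := Submodule.mul_le.2 fun m hm n hn =>
    (hQ.1.2 m (Subalgebra.mem_toSubmodule B |>.1 (hP.1.1 hm)) n hn).1
  constructor
  · intro h
    refine ⟨hPQ_P h, hPQ_Q h, ?_⟩
    have hcB : algebraMap K A x ∈ B := Subalgebra.mem_toSubmodule B |>.1 (hP.1.1 (hPQ_P h))
    have hint : IsIntegral R x := by
      refine isIntegral_of_smul_mem_submodule (Subalgebra.toSubmodule B) ?_ hBfg x ?_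
      · intro hbot
        have h1 : (1 : A) ∈ (⊥ : Submodule R A) := by
          rw [← hbot]
          exact Subalgebra.mem_toSubmodule B |>.2 B.one_mem
        rw [Submodule.mem_bot] at h1
        exact one_ne_zero h1
      · intro n hn
        rw [Algebra.smul_def]
        exact Subalgebra.mem_toSubmodule B |>.2
          (B.mul_mem hcB (Subalgebra.mem_toSubmodule B |>.1 hn))
    exact IsIntegrallyClosed.isIntegral_iff.1 hint
  · rintro ⟨hcP, hcQ, -⟩
    have h1 : (1 : A) ∈ P ⊔ Q := by
      by_cases hqp : Q ≤ P
      · have hpq : ¬ P ≤ Q := fun h' => hPQ (le_antisymm h' hqp)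
        have := one_mem_sup (K := K) B hBfg Q P hQ hP.1 hpq
        rwa [sup_comm] at this
      · exact one_mem_sup (K := K) B hBfg P Q hP hQ.1 hqp
    obtain ⟨p₀, hp₀, q₀, hq₀, hsum⟩ := Submodule.mem_sup.1 h1
    have hsplit : algebraMap K A x = p₀ * algebraMap K A x + q₀ * algebraMap K A x := by
      rw [← add_mul, hsum, one_mul]
    rw [hsplit]
    refine Submodule.add_mem _ (Submodule.mul_mem_mul hp₀ hcQ) ?_
    have hcomm : q₀ * algebraMap K A x = algebraMap K A x * q₀ := by
      have := Algebra.commutes x q₀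
      exact this.symm
    rw [hcomm]
    exact Submodule.mul_mem_mul hcP hq₀
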